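/- Let K_i ⊆ K_{i+1} = K_i ∪ {σ} with σ a negative p-simplex, let z_1, ..., z_k be harmonic (p−1)-cycles of K_i (boundaryless cocycles), and set α_j = z_j(∂σ) viewing each z_j as a cochain. If α_* := α_{j*} ≠ 0 for some j*, then for every j with α_j ≠ 0, the cycle z_j − (α_j/α_*)·z_{j*} is a harmonic (p−1)-cycle of K_{i+1}. -/

import Mathlib

/-- Let `K_{i+1} = K_i ∪ {σ}` with `σ` a negative `p`-simplex, let
`z, z*` be harmonic `(p−1)`-cycles of `K_i`, and set `α = z(∂σ)`, `α* = z*(∂σ)` (viewing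
the cycles as cochains).  If `α* ≠ 0`, then for `α ≠ 0` the cycle `z − (α/α*)·z*` is a
harmonic `(p−1)`-cycle of `K_{i+1}`.
Model: `C1 = C_p`, `C0 = C_{p-1}`, `Cm = C_{p-2}` are chain spaces of `K_{i+1}` with
boundary maps `d1 = ∂_p`, `d0 = ∂_{p-1}`; `C_p(K_i) = (ℝ∙σ)ᗮ`;
`har_{p-1}(K_i) = ker d0 ⊓ (d1 (ℝ∙σ)ᗮ)ᗮ`, `har_{p-1}(K_{i+1}) = ker d0 ⊓ (range d1)ᗮ`;
`z(∂σ) = ⟪z, d1 σ⟫`.  Negativity of `σ` means `dim H_{p-1}` drops, which is exactly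
witnessed by the existence of `z*` with `α* ≠ 0`; hence no separate hypothesis is needed. -/
theorem stmt18
    {C1 C0 Cm : Type*}
    [NormedAddCommGroup C1] [InnerProductSpace ℝ C1] [FiniteDimensional ℝ C1]
    [NormedAddCommGroup C0] [InnerProductSpace ℝ C0] [FiniteDimensional ℝ C0]
    [NormedAddCommGroup Cm] [InnerProductSpace ℝ Cm] [FiniteDimensional ℝ Cm]
    (d1 : C1 →ₗ[ℝ] C0) (d0 : C0 →ₗ[ℝ] Cm)
    (hdd0 : d0 ∘ₗ d1 = 0)
    (σ : C1) (hσ : σ ≠ 0)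
    (z zstar : C0)
    (hz : z ∈ LinearMap.ker d0 ⊓ (Submodule.map d1 (ℝ ∙ σ)ᗮ)ᗮ)
    (hzstar : zstar ∈ LinearMap.ker d0 ⊓ (Submodule.map d1 (ℝ ∙ σ)ᗮ)ᗮ)
    (α αstar : ℝ)
    (hα : α = (inner ℝ z (d1 σ) : ℝ)) (hαstar : αstar = (inner ℝ zstar (d1 σ) : ℝ))
    (hαstar0 : αstar ≠ 0) (hα0 : α ≠ 0) :
    z - (α / αstar) • zstar ∈ LinearMap.ker d0 ⊓ (LinearMap.range d1)ᗮ := by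
  obtain ⟨hz0, hz1⟩ := Submodule.mem_inf.mp hz
  obtain ⟨hw0, hw1⟩ := Submodule.mem_inf.mp hzstar
  refine Submodule.mem_inf.mpr ⟨?_, ?_⟩
  · simp only [LinearMap.mem_ker, map_sub, map_smul,
      LinearMap.mem_ker.mp hz0, LinearMap.mem_ker.mp hw0, smul_zero, sub_zero]
  · rw [Submodule.mem_orthogonal]
    rintro u ⟨x, rfl⟩
    have hcompl : IsCompl (ℝ ∙ σ) (ℝ ∙ σ)ᗮ :=
      Submodule.isCompl_orthogonal_of_hasOrthogonalProjection
    have hx : x ∈ (ℝ ∙ σ) ⊔ (ℝ ∙ σ)ᗮ := by rw [hcompl.sup_eq_top]; trivial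
    obtain ⟨a, ha, b, hb, rfl⟩ := Submodule.mem_sup.mp hx
    obtain ⟨c, rfl⟩ := Submodule.mem_span_singleton.mp ha
    have hbz : (inner ℝ (d1 b) (z - (α / αstar) • zstar) : ℝ) = 0 := by
      have h1 : (inner ℝ (d1 b) z : ℝ) = 0 :=
        real_inner_comm (d1 b) z ▸ hz1 (d1 b) ⟨b, hb, rfl⟩
      have h2 : (inner ℝ (d1 b) zstar : ℝ) = 0 :=
        real_inner_comm (d1 b) zstar ▸ hw1 (d1 b) ⟨b, hb, rfl⟩
      rw [inner_sub_right, inner_smul_right, h1, h2, mul_zero, sub_zero]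
    have hσz : (inner ℝ (d1 σ) (z - (α / αstar) • zstar) : ℝ) = 0 := by
      have hα' : (inner ℝ (d1 σ) z : ℝ) = α := by rw [hα, real_inner_comm]
      have hαstar' : (inner ℝ (d1 σ) zstar : ℝ) = αstar := by
        rw [hαstar, real_inner_comm]
      rw [inner_sub_right, inner_smul_right, hα', hαstar',
        div_mul_cancel₀ _ hαstar0, sub_self]
    rw [map_add, map_smul, inner_add_left, inner_smul_left, hbz, hσz,
      add_zero, mul_zero]
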